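/- arXiv:2203.02006 — 2 statements merged into one kernel-verified Lean document; each statement's English description precedes it below -/
import Mathlib

section
/- Let d ≥ 2, r > 0, and let D = {(x_i, y_i)}_{i=1}^n ⊂ ℝ^d × {−1, +1} satisfy (x_i)_1 = y_i·r/2, with induced dataset D̃ (first coordinate removed) linearly separable with margin γ̃ > 0. Then the maximum ℓ2-margin of D equals √((r/2)² + γ̃²), i.e. max_{‖θ‖₂ ≤ 1} min_{i∈[n]} y_i θᵀ x_i = √(r²/4 + γ̃²). -/
open MeasureTheory ProbabilityTheory Real Set
open scoped ENNReal BigOperators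

noncomputable section

/-- Euclidean dot product on `Fin d → ℝ`. -/
def dot {d : ℕ} (u v : Fin d → ℝ) : ℝ := ∑ j, u j * v j

/-- Euclidean (`ℓ2`) norm on `Fin d → ℝ`. -/
def norm2 {d : ℕ} (u : Fin d → ℝ) : ℝ := Real.sqrt (∑ j, (u j) ^ 2)

/-- The (minimum) margin of the linear classifier `θ` on the dataset `{(x i, y i)}`. -/
def margin {d n : ℕ} (x : Fin n → Fin d → ℝ) (y : Fin n → ℝ) (θ : Fin d → ℝ) : ℝ :=
  ⨅ i, y i * dot θ (x i)

lemma iInf_const_add {n : ℕ} (hn : 0 < n) (c : ℝ) (f : Fin n → ℝ) :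
    ⨅ i, (c + f i) = c + ⨅ i, f i := by
  haveI : Nonempty (Fin n) := ⟨⟨0, hn⟩⟩
  have hbdd : BddBelow (Set.range f) := (Set.finite_range f).bddBelow
  obtain ⟨i, hi⟩ := exists_eq_ciInf_of_finite (f := f)
  apply le_antisymm
  · calc ⨅ j, (c + f j) ≤ c + f i :=
          ciInf_le ((Set.finite_range _).bddBelow) i
      _ = c + ⨅ j, f j := by rw [hi]
  · exact le_ciInf fun j => add_le_add le_rfl (ciInf_le hbdd j)

lemma cauchy2 (a b u v : ℝ) :
    a * u + b * v ≤ Real.sqrt (a ^ 2 + b ^ 2) * Real.sqrt (u ^ 2 + v ^ 2) := by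
  have h1 : (a * u + b * v) ^ 2 ≤ (a ^ 2 + b ^ 2) * (u ^ 2 + v ^ 2) := by
    nlinarith [sq_nonneg (a * v - b * u)]
  calc a * u + b * v ≤ |a * u + b * v| := le_abs_self _
    _ = Real.sqrt ((a * u + b * v) ^ 2) := (Real.sqrt_sq_eq_abs _).symm
    _ ≤ Real.sqrt ((a ^ 2 + b ^ 2) * (u ^ 2 + v ^ 2)) := Real.sqrt_le_sqrt h1
    _ = _ := Real.sqrt_mul (by positivity) _

lemma dot_smul {d : ℕ} (c : ℝ) (u v : Fin d → ℝ) : dot (c • u) v = c * dot u v := by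
  simp [dot, Finset.mul_sum, mul_assoc]

lemma margin_smul {d n : ℕ} (x : Fin n → Fin d → ℝ) (y : Fin n → ℝ) (θ : Fin d → ℝ)
    {c : ℝ} (hc : 0 ≤ c) : margin x y (c • θ) = c * margin x y θ := by
  unfold margin
  rw [Real.mul_iInf_of_nonneg hc]
  refine iInf_congr fun i => ?_
  rw [dot_smul]; ring

lemma norm2_smul {d : ℕ} (c : ℝ) (u : Fin d → ℝ) : norm2 (c • u) = |c| * norm2 u := by
  unfold norm2
  rw [← Real.sqrt_sq_eq_abs, ← Real.sqrt_mul (sq_nonneg c), Finset.mul_sum]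
  congr 1; refine Finset.sum_congr rfl fun j _ => ?_
  simp [mul_pow]

lemma norm2_nonneg {d : ℕ} (u : Fin d → ℝ) : 0 ≤ norm2 u := Real.sqrt_nonneg _

lemma sq_norm2 {d : ℕ} (u : Fin d → ℝ) : (norm2 u) ^ 2 = ∑ j, (u j) ^ 2 :=
  Real.sq_sqrt (by positivity)

lemma margin_split {m n : ℕ} (hn : 0 < n) (r : ℝ)
    (x : Fin n → Fin (m + 1) → ℝ) (y : Fin n → ℝ)
    (hy : ∀ i, y i = 1 ∨ y i = -1)
    (hx1 : ∀ i, x i 0 = y i * (r / 2)) (θ : Fin (m + 1) → ℝ) :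
    margin x y θ = θ 0 * (r / 2) + margin (fun i => Fin.tail (x i)) y (Fin.tail θ) := by
  unfold margin
  rw [← iInf_const_add hn]
  refine iInf_congr fun i => ?_
  have hy2 : y i * y i = 1 := by rcases hy i with h | h <;> rw [h] <;> norm_num
  unfold dot
  rw [Fin.sum_univ_succ, hx1 i]
  simp only [Fin.tail]
  rcases hy i with h | h <;> rw [h] <;> ring

/-- For a dataset in `ℝ^{m+1} × {±1}` with first covariate coordinate
`y_i · r/2`, whose induced dataset is linearly separable with maximum `ℓ2`-margin `γ̃ > 0`,
the maximum `ℓ2`-margin of the full dataset is `√(r²/4 + γ̃²)`: it is the greatest element of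
the set of margins achieved by vectors of `ℓ2`-norm at most one. -/
theorem max_margin_value
    {m n : ℕ} (hm : 1 ≤ m) (hn : 0 < n) (r : ℝ) (hr : 0 < r)
    (x : Fin n → Fin (m + 1) → ℝ) (y : Fin n → ℝ)
    (hy : ∀ i, y i = 1 ∨ y i = -1)
    (hx1 : ∀ i, x i 0 = y i * (r / 2))
    (γt : ℝ) (hγt_pos : 0 < γt)
    (hγt : IsGreatest
      {c | ∃ θt : Fin m → ℝ, norm2 θt ≤ 1 ∧ c = margin (fun i => Fin.tail (x i)) y θt} γt) :
    IsGreatest {c | ∃ θ : Fin (m + 1) → ℝ, norm2 θ ≤ 1 ∧ c = margin x y θ}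
      (Real.sqrt (r ^ 2 / 4 + γt ^ 2)) := by
  haveI : Nonempty (Fin n) := ⟨⟨0, hn⟩⟩
  set γ : ℝ := Real.sqrt (r ^ 2 / 4 + γt ^ 2) with hγdef
  have hsum_pos : 0 < r ^ 2 / 4 + γt ^ 2 := by positivity
  have hγ_pos : 0 < γ := Real.sqrt_pos.mpr hsum_pos
  have hγ_sq : γ ^ 2 = r ^ 2 / 4 + γt ^ 2 := Real.sq_sqrt hsum_pos.le
  constructor
  · -- membership
    obtain ⟨θt, hθtn, hθtm⟩ := hγt.1
    refine ⟨Fin.cons (r / 2 / γ) ((γt / γ) • θt), ?_, ?_⟩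
    · -- norm bound
      have hθt_sq : ∑ j, (θt j) ^ 2 ≤ 1 := by
        have := sq_norm2 θt
        nlinarith [norm2_nonneg θt]
      have : norm2 (Fin.cons (r / 2 / γ) ((γt / γ) • θt) : Fin (m+1) → ℝ) ^ 2 ≤ 1 := by
        rw [sq_norm2, Fin.sum_univ_succ]
        simp only [Fin.cons_zero, Fin.cons_succ]
        have h1 : ∑ j : Fin m, (((γt / γ) • θt) j) ^ 2 = (γt / γ) ^ 2 * ∑ j, (θt j) ^ 2 := by
          rw [Finset.mul_sum]
          refine Finset.sum_congr rfl fun j _ => ?_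
          simp [mul_pow]
        rw [h1]
        have h2 : (r / 2 / γ) ^ 2 + (γt / γ) ^ 2 * ∑ j, (θt j) ^ 2
            ≤ (r / 2 / γ) ^ 2 + (γt / γ) ^ 2 := by nlinarith
        have h3 : (r / 2 / γ) ^ 2 + (γt / γ) ^ 2 = 1 := by
          field_simp
          nlinarith [hγ_sq]
        linarith
      nlinarith [norm2_nonneg (Fin.cons (r / 2 / γ) ((γt / γ) • θt) : Fin (m+1) → ℝ)]
    · rw [margin_split hn r x y hy hx1]
      rw [Fin.cons_zero, Fin.tail_cons]
      rw [margin_smul _ _ _ (by positivity : (0:ℝ) ≤ γt / γ)]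
      rw [← hθtm]
      field_simp
      nlinarith [hγ_sq]
  · -- upper bound
    rintro c ⟨θ, hθn, rfl⟩
    set a := θ 0 with ha
    set θt := Fin.tail θ with hθt
    set b := norm2 θt with hb
    have hb0 : 0 ≤ b := norm2_nonneg _
    have hM : margin (fun i => Fin.tail (x i)) y θt ≤ b * γt := by
      rcases eq_or_lt_of_le hb0 with hbe | hbp
      · -- b = 0, hence θt = 0
        have hsum0 : ∑ j, (θt j) ^ 2 = 0 := by
          have := sq_norm2 θt
          rw [← hb, ← hbe] at this
          linarith [this.symm]
        have hz : ∀ j, θt j = 0 := by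
          intro j
          have := (Finset.sum_eq_zero_iff_of_nonneg (fun j _ => sq_nonneg (θt j))).mp hsum0 j
            (Finset.mem_univ j)
          exact (pow_eq_zero_iff two_ne_zero).mp this
        have : margin (fun i => Fin.tail (x i)) y θt = 0 := by
          unfold margin dot
          have : ∀ i : Fin n, y i * ∑ j, θt j * Fin.tail (x i) j = 0 := by
            intro i
            have : ∑ j, θt j * Fin.tail (x i) j = 0 :=
              Finset.sum_eq_zero fun j _ => by rw [hz j, zero_mul]
            rw [this, mul_zero]
          simp only [this, ciInf_const]
        rw [this, ← hbe, zero_mul]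
      · -- b > 0
        have hmem : margin (fun i => Fin.tail (x i)) y ((1 / b) • θt) ≤ γt := by
          apply hγt.2
          refine ⟨(1 / b) • θt, ?_, rfl⟩
          rw [norm2_smul, abs_of_nonneg (by positivity : (0:ℝ) ≤ 1 / b), ← hb]
          rw [one_div, inv_mul_cancel₀ (ne_of_gt hbp)]
        rw [margin_smul _ _ _ (by positivity : (0:ℝ) ≤ 1 / b)] at hmem
        calc margin (fun i => Fin.tail (x i)) y θt
            = b * (1 / b * margin (fun i => Fin.tail (x i)) y θt) := by
              field_simp
          _ ≤ b * γt := by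
              exact mul_le_mul_of_nonneg_left hmem hb0
    have hab : a ^ 2 + b ^ 2 ≤ 1 := by
      have hθsq : (norm2 θ) ^ 2 ≤ 1 := by nlinarith [norm2_nonneg θ]
      have : ∑ j, (θ j) ^ 2 = a ^ 2 + ∑ j, (θt j) ^ 2 := by
        rw [Fin.sum_univ_succ]
        rfl
      have hb2 : b ^ 2 = ∑ j, (θt j) ^ 2 := sq_norm2 θt
      rw [sq_norm2] at hθsq
      linarith [this ▸ hθsq]
    calc margin x y θ = a * (r / 2) + margin (fun i => Fin.tail (x i)) y θt :=
          margin_split hn r x y hy hx1 θ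
      _ ≤ a * (r / 2) + b * γt := by linarith
      _ ≤ Real.sqrt (a ^ 2 + b ^ 2) * Real.sqrt ((r / 2) ^ 2 + γt ^ 2) := cauchy2 a b (r/2) γt
      _ ≤ 1 * Real.sqrt ((r / 2) ^ 2 + γt ^ 2) := by
          apply mul_le_mul_of_nonneg_right _ (Real.sqrt_nonneg _)
          calc Real.sqrt (a ^ 2 + b ^ 2) ≤ Real.sqrt 1 := Real.sqrt_le_sqrt hab
            _ = 1 := Real.sqrt_one
      _ = γ := by rw [one_mul, hγdef]; congr 1; ring

end
end

section
/- Let d ≥ 2, r > 0, σ > 0, 0 ≤ ε_tr < r/2, 0 ≤ ε_te, and let D = {(x_i, y_i)}_{i=1}^n satisfy (x_i)_1 = y_i·r/2 with induced dataset linearly separable with margin γ̃ > 0, so that the ε_tr-robust max-ℓ2-margin solution with respect to the signal-directed perturbation sets is θ̂^{ε_tr} = (1/√((r − 2ε_tr)² + 4γ̃²))·(r − 2ε_tr, 2γ̃·θ̃). Then the ε_te-attack-susceptibility of θ̂^{ε_tr} on P_r equals Φ((r − 2ε_tr)(ε_te − r/2)/(2γ̃σ)) − Φ((r − 2ε_tr)(−ε_te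 − r/2)/(2γ̃σ)). -/
open MeasureTheory ProbabilityTheory Real Set
open scoped ENNReal BigOperators
open scoped NNReal

noncomputable section

/-- The isotropic Gaussian measure `N(0, σ² I_m)` on `ℝ^m`. -/
def gaussPi (m : ℕ) (σ : ℝ) : Measure (Fin m → ℝ) :=
  Measure.pi fun _ => gaussianReal 0 (Real.toNNReal (σ ^ 2))

/-- The data distribution `P_r` on `ℝ^{m+1} × {±1}`: the label `Y` is uniform on `{±1}`
and the covariate is `X = (Y · r/2, X̃)` with `X̃ ~ N(0, σ² I_m)`. -/
def Pdist (m : ℕ) (r σ : ℝ) : Measure ((Fin (m + 1) → ℝ) × ℝ) :=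
  (2⁻¹ : ℝ≥0∞) • (gaussPi m σ).map (fun xt => ((Fin.cons (r / 2) xt : Fin (m + 1) → ℝ), (1 : ℝ)))
    + (2⁻¹ : ℝ≥0∞) • (gaussPi m σ).map
        (fun xt => ((Fin.cons (-(r / 2)) xt : Fin (m + 1) → ℝ), (-1 : ℝ)))

/-- The standard normal cumulative distribution function `Φ`. -/
def stdGaussianCDF (z : ℝ) : ℝ := ((gaussianReal 0 1) (Iic z)).toReal

lemma pdf_conv (v w : ℝ≥0) (hv : v ≠ 0) (hw : w ≠ 0) (z : ℝ) :
    ∫ x : ℝ, gaussianPDFReal 0 v x * gaussianPDFReal 0 w (z - x) =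
      gaussianPDFReal 0 (v + w) z := by
  have hv' : (0:ℝ) < v := lt_of_le_of_ne (v.coe_nonneg) (by exact_mod_cast (Ne.symm hv))
  have hw' : (0:ℝ) < w := lt_of_le_of_ne (w.coe_nonneg) (by exact_mod_cast (Ne.symm hw))
  have hvw : (0:ℝ) < (v:ℝ) + w := by positivity
  set k : ℝ := ((v:ℝ) + w) / (2 * v * w) with hk
  have hk' : 0 < k := by positivity
  set c : ℝ := (v:ℝ) * z / ((v:ℝ) + w) with hc
  have key : ∀ x : ℝ, gaussianPDFReal 0 v x * gaussianPDFReal 0 w (z - x)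
      = ((√(2 * π * v))⁻¹ * (√(2 * π * w))⁻¹ * rexp (- z^2 / (2 * ((v:ℝ)+w))))
        * rexp (-k * (x - c)^2) := by
    intro x
    have e : rexp (-x^2/(2*(v:ℝ))) * rexp (-(z-x)^2/(2*(w:ℝ)))
        = rexp (-z^2/(2*((v:ℝ)+w))) * rexp (-k*(x-c)^2) := by
      rw [← Real.exp_add, ← Real.exp_add]
      congr 1
      have hv0 : (v:ℝ) ≠ 0 := ne_of_gt hv'
      have hw0 : (w:ℝ) ≠ 0 := ne_of_gt hw'
      have hvw0 : (v:ℝ) + w ≠ 0 := ne_of_gt hvw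
      rw [hk, hc]
      field_simp
      ring
    simp only [gaussianPDFReal, sub_zero]
    linear_combination ((√(2*π*(v:ℝ)))⁻¹ * (√(2*π*(w:ℝ)))⁻¹) * e
  rw [integral_congr_ae (Filter.Eventually.of_forall key), integral_const_mul,
    integral_sub_right_eq_self (fun x => rexp (-k * x^2)) c, integral_gaussian]
  rw [gaussianPDFReal]
  rw [sub_zero]
  have h1 : √(π / k) = √(2 * π * v) * √(2 * π * w) / √(2 * π * ((v:ℝ)+w)) := by
    rw [← Real.sqrt_mul (by positivity), ← Real.sqrt_div (by positivity)]
    congr 1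
    rw [hk]
    have hv0 : (v:ℝ) ≠ 0 := ne_of_gt hv'
    have hw0 : (w:ℝ) ≠ 0 := ne_of_gt hw'
    have hvw0 : (v:ℝ) + w ≠ 0 := ne_of_gt hvw
    field_simp
  rw [h1]
  have h2 : √(2 * π * v) ≠ 0 := by positivity
  have h3 : √(2 * π * w) ≠ 0 := by positivity
  have h4 : √(2 * π * ((v:ℝ)+w)) ≠ 0 := by positivity
  rw [NNReal.coe_add]
  field_simp

lemma gaussianPDFReal_le (w : ℝ≥0) (t : ℝ) :
    gaussianPDFReal 0 w t ≤ (√(2 * π * w))⁻¹ := by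
  rw [gaussianPDFReal, sub_zero]
  nth_rewrite 2 [show (√(2 * π * (w:ℝ)))⁻¹ = (√(2 * π * (w:ℝ)))⁻¹ * 1 by ring]
  gcongr
  rw [Real.exp_le_one_iff]
  apply div_nonpos_of_nonpos_of_nonneg
  · simpa using sq_nonneg t
  · positivity

set_option maxHeartbeats 400000 in
lemma gauss_conv (v w : ℝ≥0) :
    Measure.map (fun p : ℝ × ℝ => p.1 + p.2) ((gaussianReal 0 v).prod (gaussianReal 0 w))
      = gaussianReal 0 (v + w) := by
  by_cases hv : v = 0
  · subst hv
    rw [zero_add, gaussianReal_zero_var, Measure.dirac_prod,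
      Measure.map_map measurable_add (measurable_prodMk_left)]
    simp only [Function.comp_def, zero_add]
    exact Measure.map_id
  by_cases hw : w = 0
  · subst hw
    rw [add_zero, gaussianReal_zero_var, Measure.prod_dirac,
      Measure.map_map measurable_add (measurable_prodMk_right)]
    simp only [Function.comp_def, add_zero]
    exact Measure.map_id
  have hvw : v + w ≠ 0 := by simp [hv]
  ext s hs
  rw [Measure.map_apply measurable_add hs,
    Measure.prod_apply (measurable_add hs)]
  have hpdfw_meas : Measurable (fun q : ℝ × ℝ => gaussianPDF q.1 w q.2) := by
    apply Measurable.ennreal_ofReal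
    apply Continuous.measurable
    unfold gaussianPDFReal
    continuity
  have step1 : ∀ x : ℝ, (gaussianReal 0 w) (Prod.mk x ⁻¹' ((fun p : ℝ × ℝ => p.1 + p.2) ⁻¹' s))
      = ∫⁻ y in s, gaussianPDF x w y := by
    intro x
    have : (Prod.mk x ⁻¹' ((fun p : ℝ × ℝ => p.1 + p.2) ⁻¹' s)) = (fun y => x + y) ⁻¹' s := rfl
    rw [this, ← Measure.map_apply (measurable_const_add x) hs, gaussianReal_map_const_add x,
      zero_add, gaussianReal_apply x hw s]
  simp_rw [step1]
  rw [gaussianReal_of_var_ne_zero 0 hv,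
    lintegral_withDensity_eq_lintegral_mul volume (measurable_gaussianPDF 0 v)
      (Measurable.lintegral_prod_right (f := fun x y => gaussianPDF x w y) hpdfw_meas)]
  simp only [Pi.mul_apply]
  have step2 : ∀ x : ℝ, gaussianPDF 0 v x * ∫⁻ y in s, gaussianPDF x w y
      = ∫⁻ y in s, gaussianPDF 0 v x * gaussianPDF x w y := fun x =>
    (lintegral_const_mul _ (hpdfw_meas.comp measurable_prodMk_left)).symm
  simp_rw [step2]
  rw [lintegral_lintegral_swap (((measurable_gaussianPDF 0 v).comp measurable_fst).mul
    hpdfw_meas).aemeasurable]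
  have step3 : ∀ y : ℝ, ∫⁻ x, gaussianPDF 0 v x * gaussianPDF x w y
      = gaussianPDF 0 (v + w) y := by
    intro y
    have hxy : ∀ x : ℝ, gaussianPDFReal x w y = gaussianPDFReal 0 w (y - x) := by
      intro x; simp [gaussianPDFReal]
    have hbd : ∀ x : ℝ, ‖gaussianPDFReal 0 w (y - x)‖ ≤ (√(2 * π * w))⁻¹ := by
      intro x
      rw [Real.norm_of_nonneg (gaussianPDFReal_nonneg 0 w _)]
      exact gaussianPDFReal_le w _
    have hint : Integrable (fun x => gaussianPDFReal 0 v x * gaussianPDFReal 0 w (y - x)) := by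
      have := Integrable.bdd_mul (f := fun x => gaussianPDFReal 0 w (y - x))
        (integrable_gaussianPDFReal 0 v)
        (Continuous.aestronglyMeasurable (by unfold gaussianPDFReal; continuity))
        (c := (√(2 * π * w))⁻¹) (ae_of_all _ hbd)
      simpa [mul_comm] using this
    simp_rw [gaussianPDF_def, hxy,
      ← ENNReal.ofReal_mul (gaussianPDFReal_nonneg 0 v _)]
    rw [← ofReal_integral_eq_lintegral_ofReal hint (ae_of_all _ fun x =>
      mul_nonneg (gaussianPDFReal_nonneg 0 v x) (gaussianPDFReal_nonneg 0 w _)),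
      pdf_conv v w hv hw y]
  simp_rw [step3]
  exact (gaussianReal_apply 0 hvw s).symm

lemma map_weighted_sum (v : ℝ≥0) : ∀ (m : ℕ) (w : Fin m → ℝ),
    Measure.map (fun x : Fin m → ℝ => ∑ j, w j * x j) (Measure.pi fun _ => gaussianReal 0 v)
      = gaussianReal 0 ((∑ j, (w j)^2).toNNReal * v) := by
  intro m
  induction m with
  | zero =>
    intro w
    have h0 : (fun x : Fin 0 → ℝ => ∑ j, w j * x j) = fun _ => (0:ℝ) := by
      funext x; simp
    rw [h0, Measure.map_const]
    simp [Real.toNNReal_zero, gaussianReal_zero_var]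
  | succ m ih =>
    intro w
    have h := (measurePreserving_piFinSuccAbove (fun _ : Fin (m+1) => gaussianReal 0 v) 0).map_eq
    have hfun : (fun x : Fin (m+1) → ℝ => ∑ j, w j * x j)
        = (fun p : ℝ × (Fin m → ℝ) => w 0 * p.1 + ∑ j, w (Fin.succ j) * p.2 j)
          ∘ (MeasurableEquiv.piFinSuccAbove (fun _ => ℝ) 0) := by
      funext x
      simp [MeasurableEquiv.piFinSuccAbove_apply, Fin.sum_univ_succ, Fin.zero_succAbove, Fin.tail]
    have hmsum : Measurable (fun x : Fin m → ℝ => ∑ j, w (Fin.succ j) * x j) :=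
      Finset.univ.measurable_sum fun j _ => (measurable_pi_apply j).const_mul _
    have hg : Measurable (fun p : ℝ × (Fin m → ℝ) => w 0 * p.1 + ∑ j, w (Fin.succ j) * p.2 j) :=
      (measurable_fst.const_mul _).add <|
        Finset.univ.measurable_sum fun j _ => ((measurable_pi_apply j).comp measurable_snd).const_mul _
    rw [hfun, ← Measure.map_map hg (MeasurableEquiv.measurable _), h]
    have hg2 : (fun p : ℝ × (Fin m → ℝ) => w 0 * p.1 + ∑ j, w (Fin.succ j) * p.2 j)
        = (fun q : ℝ × ℝ => q.1 + q.2)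
          ∘ (Prod.map (fun a : ℝ => w 0 * a) (fun x : Fin m → ℝ => ∑ j, w (Fin.succ j) * x j)) := rfl
    rw [hg2, ← Measure.map_map measurable_add
        ((measurable_const_mul _).prodMap hmsum),
      ← Measure.map_prod_map _ _ (measurable_const_mul _) hmsum,
      gaussianReal_map_const_mul (w 0), mul_zero, ih (fun j => w (Fin.succ j)), gauss_conv]
    congr 1
    apply NNReal.coe_injective
    have h1 : (0:ℝ) ≤ ∑ j : Fin m, (w (Fin.succ j))^2 :=
      Finset.sum_nonneg fun j _ => sq_nonneg _
    have h2 : (0:ℝ) ≤ ∑ j : Fin (m+1), (w j)^2 :=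
      Finset.sum_nonneg fun j _ => sq_nonneg _
    push_cast [Real.coe_toNNReal _ h1, Real.coe_toNNReal _ h2]
    rw [Fin.sum_univ_succ]
    ring

lemma gauss_Ioo_toReal (v : ℝ≥0) (hv : v ≠ 0) (l u : ℝ) (hlu : l ≤ u) :
    ((gaussianReal 0 v) (Ioo l u)).toReal
      = ((gaussianReal 0 v) (Iic u)).toReal - ((gaussianReal 0 v) (Iic l)).toReal := by
  have hsing : (gaussianReal 0 v) {u} = 0 :=
    gaussianReal_absolutelyContinuous 0 hv (Real.volume_singleton)
  have hIoc : (gaussianReal 0 v) (Ioc l u) = (gaussianReal 0 v) (Ioo l u) := by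
    apply le_antisymm
    · calc (gaussianReal 0 v) (Ioc l u) ≤ (gaussianReal 0 v) (Ioo l u ∪ {u}) := by
            apply measure_mono; intro t ht
            rcases eq_or_lt_of_le ht.2 with h | h
            · exact Or.inr (by simp [h])
            · exact Or.inl ⟨ht.1, h⟩
        _ ≤ _ := by
            refine le_trans (measure_union_le _ _) ?_
            simp [hsing]
    · exact measure_mono Ioo_subset_Ioc_self
  have hsplit : (gaussianReal 0 v) (Iic u)
      = (gaussianReal 0 v) (Iic l) + (gaussianReal 0 v) (Ioc l u) := by
    rw [← Iic_union_Ioc_eq_Iic hlu, measure_union _ measurableSet_Ioc]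
    exact Iic_disjoint_Ioc le_rfl
  rw [← hIoc]
  rw [hsplit, ENNReal.toReal_add (measure_ne_top _ _) (measure_ne_top _ _)]
  ring

lemma gauss_singleton (v : ℝ≥0) (hv : v ≠ 0) (q : ℝ) : gaussianReal 0 v {q} = 0 :=
  gaussianReal_absolutelyContinuous 0 hv (Real.volume_singleton)

lemma cdf_scale (σ : ℝ) (hσ : 0 < σ) (z : ℝ) :
    ((gaussianReal 0 (Real.toNNReal (σ^2))) (Iic z)).toReal = stdGaussianCDF (z / σ) := by
  have hmap : Measure.map (fun x => σ * x) (gaussianReal 0 1)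
      = gaussianReal 0 (Real.toNNReal (σ^2)) := by
    rw [gaussianReal_map_const_mul σ]
    congr 1
    · ring
    · apply NNReal.coe_injective
      simp [Real.coe_toNNReal _ (sq_nonneg σ)]
  rw [← hmap, Measure.map_apply (measurable_const_mul σ) measurableSet_Iic]
  have : (fun x => σ * x) ⁻¹' (Iic z) = Iic (z / σ) := by
    ext t; simp [mem_Iic, le_div_iff₀ hσ, mul_comm]
  rw [this, stdGaussianCDF]

lemma cdf_symm (z : ℝ) : stdGaussianCDF (-z) = 1 - stdGaussianCDF z := by
  have hmap : Measure.map (fun x => (-1 : ℝ) * x) (gaussianReal 0 1) = gaussianReal 0 1 := by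
    rw [gaussianReal_map_const_mul (-1)]
    norm_num
  have h1 : (gaussianReal 0 1) (Iic (-z)) = (gaussianReal 0 1) (Ici z) := by
    conv_lhs => rw [← hmap]
    rw [Measure.map_apply (measurable_const_mul _) measurableSet_Iic]
    congr 1
    ext t; simp [mem_Iic, mem_Ici]
  have hsing : (gaussianReal 0 1) {z} = 0 :=
    gaussianReal_absolutelyContinuous 0 one_ne_zero (Real.volume_singleton)
  have h2 : (gaussianReal 0 1) (Ici z) = (gaussianReal 0 1) (Ioi z) := by
    apply le_antisymm
    · calc (gaussianReal 0 1) (Ici z) ≤ (gaussianReal 0 1) (Ioi z ∪ {z}) := by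
            apply measure_mono; intro t ht
            rcases eq_or_lt_of_le (mem_Ici.mp ht) with h | h
            · exact Or.inr (by simp [h.symm])
            · exact Or.inl h
        _ ≤ _ := le_trans (measure_union_le _ _) (by simp [hsing])
    · exact measure_mono Ioi_subset_Ici_self
  have h3 : (gaussianReal 0 1) (Iic z) + (gaussianReal 0 1) (Ioi z) = 1 := by
    rw [← measure_union (Iic_disjoint_Ioi le_rfl) measurableSet_Ioi, Iic_union_Ioi,
      measure_univ]
  have h4 := congrArg ENNReal.toReal h3
  rw [ENNReal.toReal_add (measure_ne_top _ _) (measure_ne_top _ _)] at h4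
  simp only [ENNReal.toReal_one] at h4
  rw [stdGaussianCDF, stdGaussianCDF, h1, h2]
  linarith

lemma event_iff (εte t : ℝ) (hεte : 0 ≤ εte) (ht : 0 < t) (s : ℝ) :
    (∃ β : ℝ, |β| ≤ εte ∧ s * (s + β * t) < 0) ↔ (s ≠ 0 ∧ |s| < εte * t) := by
  constructor
  · rintro ⟨β, hβ, hlt⟩
    obtain ⟨hβ1, hβ2⟩ := abs_le.mp hβ
    have hs : s ≠ 0 := by rintro rfl; simp at hlt
    refine ⟨hs, ?_⟩
    rcases lt_or_gt_of_ne hs with h | h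
    · rw [abs_of_neg h]
      by_contra hcon
      push_neg at hcon
      have h5 : β * t ≤ εte * t := mul_le_mul_of_nonneg_right hβ2 ht.le
      have h6 : s + β * t ≤ 0 := by linarith
      nlinarith [mul_nonneg (neg_nonneg.mpr h.le) (neg_nonneg.mpr h6)]
    · rw [abs_of_pos h]
      by_contra hcon
      push_neg at hcon
      have h5 : (-εte) * t ≤ β * t := mul_le_mul_of_nonneg_right hβ1 ht.le
      have h6 : 0 ≤ s + β * t := by nlinarith
      nlinarith [mul_nonneg h.le h6]
  · rintro ⟨hs, habs⟩
    rcases lt_or_gt_of_ne hs with h | h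
    · refine ⟨εte, (abs_of_nonneg hεte).le, ?_⟩
      rw [abs_of_neg h] at habs
      exact mul_neg_of_neg_of_pos h (by linarith)
    · refine ⟨-εte, by rw [abs_neg]; exact (abs_of_nonneg hεte).le, ?_⟩
      rw [abs_of_pos h] at habs
      exact mul_neg_of_pos_of_neg h (by nlinarith)

/-- Under the hypotheses of Statement 4, the `ε_te`-attack-susceptibility
on `P_r` of the `ε_tr`-robust max-`ℓ2`-margin solution
`θ̂^{ε_tr} = (1/√((r − 2ε_tr)² + 4γ̃²)) • (r − 2ε_tr, 2γ̃ θ̃)` (the probability that the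
prediction changes sign under some signal-directed perturbation of size at most `ε_te`)
equals `Φ((r − 2ε_tr)(ε_te − r/2)/(2γ̃σ)) − Φ((r − 2ε_tr)(−ε_te − r/2)/(2γ̃σ))`. -/
theorem susceptibility_of_robust_max_margin
    {m n : ℕ} (hm : 1 ≤ m) (hn : 0 < n) (r σ εtr εte : ℝ) (hr : 0 < r) (hσ : 0 < σ)
    (hεtr : 0 ≤ εtr) (hεtr2 : εtr < r / 2) (hεte : 0 ≤ εte)
    (x : Fin n → Fin (m + 1) → ℝ) (y : Fin n → ℝ)
    (hy : ∀ i, y i = 1 ∨ y i = -1)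
    (hx1 : ∀ i, x i 0 = y i * (r / 2))
    (θt : Fin m → ℝ) (γt : ℝ)
    (hθt_norm : norm2 θt = 1)
    (hγt : γt = margin (fun i => Fin.tail (x i)) y θt)
    (hγt_pos : 0 < γt)
    (hθt_max : ∀ θ : Fin m → ℝ, norm2 θ ≤ 1 →
      margin (fun i => Fin.tail (x i)) y θ ≤ γt) :
    ∀ θhat : Fin (m + 1) → ℝ,
      θhat = (Real.sqrt ((r - 2 * εtr) ^ 2 + 4 * γt ^ 2))⁻¹ •
        (Fin.cons (r - 2 * εtr) ((2 * γt) • θt) : Fin (m + 1) → ℝ) →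
      ((Pdist m r σ) {p | ∃ β : ℝ, |β| ≤ εte ∧
          (dot θhat p.1) * (dot θhat (p.1 + β • (Pi.single 0 1 : Fin (m + 1) → ℝ))) < 0}).toReal
        = stdGaussianCDF ((r - 2 * εtr) * (εte - r / 2) / (2 * γt * σ))
          - stdGaussianCDF ((r - 2 * εtr) * (-εte - r / 2) / (2 * γt * σ)) := by
  intro θhat hθhat
  set a := r - 2 * εtr with hadef
  set b := 2 * γt with hbdef
  have ha : 0 < a := by rw [hadef]; linarith
  have hb : 0 < b := by rw [hbdef]; linarith
  set c := Real.sqrt (a ^ 2 + b ^ 2) with hcdef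
  have hc : 0 < c := Real.sqrt_pos.mpr (by positivity)
  have hc2 : Real.sqrt (a ^ 2 + 4 * γt ^ 2) = c := by
    rw [hcdef]; congr 1; rw [hbdef]; ring
  rw [hc2] at hθhat
  have hS1 : ∑ j, (θt j) ^ 2 = 1 := by
    have h := hθt_norm
    rwa [norm2, Real.sqrt_eq_one] at h
  have hθ0 : θhat 0 = c⁻¹ * a := by rw [hθhat]; simp
  have hθs : ∀ j : Fin m, θhat (Fin.succ j) = c⁻¹ * (b * θt j) := by
    intro j; rw [hθhat, hbdef]; simp
  have ht : 0 < c⁻¹ * a := by positivity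
  -- linearity of dot in the perturbation
  have hdot_single : dot θhat (Pi.single 0 1) = θhat 0 := by
    rw [dot, Finset.sum_eq_single 0]
    · simp
    · intro j _ hj; rw [Pi.single_eq_of_ne hj]; ring
    · simp
  have hdot_lin : ∀ (u : Fin (m+1) → ℝ) (β : ℝ),
      dot θhat (u + β • (Pi.single 0 1 : Fin (m+1) → ℝ)) = dot θhat u + β * (c⁻¹ * a) := by
    intro u β
    have h1 : dot θhat (u + β • (Pi.single 0 1 : Fin (m+1) → ℝ))
        = dot θhat u + β * dot θhat (Pi.single 0 1) := by
      simp only [dot, Pi.add_apply, Pi.smul_apply, smul_eq_mul, mul_add,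
        Finset.sum_add_distrib, Finset.mul_sum]
      congr 1
      exact Finset.sum_congr rfl fun j _ => by ring
    rw [h1, hdot_single, hθ0]
  set K : Set ℝ := {s : ℝ | s ≠ 0 ∧ |s| < εte * (c⁻¹ * a)} with hKdef
  have hK_meas : MeasurableSet K := by
    apply IsOpen.measurableSet
    rw [hKdef, setOf_and]
    exact isOpen_ne.inter (isOpen_lt continuous_abs continuous_const)
  have hdotm : Measurable fun p : (Fin (m+1) → ℝ) × ℝ => dot θhat p.1 := by
    simp only [dot]
    exact Finset.univ.measurable_sum fun j _ => by
      fun_prop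
  have hSet : {p : (Fin (m+1) → ℝ) × ℝ | ∃ β : ℝ, |β| ≤ εte ∧
      (dot θhat p.1) * (dot θhat (p.1 + β • (Pi.single 0 1 : Fin (m+1) → ℝ))) < 0}
      = (fun p : (Fin (m+1) → ℝ) × ℝ => dot θhat p.1) ⁻¹' K := by
    ext p
    simp only [mem_setOf_eq, mem_preimage, hKdef]
    rw [← event_iff εte (c⁻¹*a) hεte ht (dot θhat p.1)]
    constructor
    · rintro ⟨β, h1, h2⟩; exact ⟨β, h1, by rwa [hdot_lin] at h2⟩
    · rintro ⟨β, h1, h2⟩; exact ⟨β, h1, by rwa [hdot_lin]⟩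
  rw [hSet]
  -- dot on cons vectors
  have hcons : ∀ (v : ℝ) (xt : Fin m → ℝ),
      dot θhat (Fin.cons v xt) = c⁻¹ * (a * v + b * ∑ j, θt j * xt j) := by
    intro v xt
    rw [dot, Fin.sum_univ_succ]
    simp only [Fin.cons_zero, Fin.cons_succ, hθ0, hθs]
    have hsum : ∑ j : Fin m, c⁻¹ * (b * θt j) * xt j = c⁻¹ * (b * ∑ j, θt j * xt j) := by
      rw [Finset.mul_sum, Finset.mul_sum]
      exact Finset.sum_congr rfl fun j _ => by ring
    rw [hsum, mul_add]
    ring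
  have hbne : b ≠ 0 := ne_of_gt hb
  have hcinv : (0:ℝ) < c⁻¹ := inv_pos.mpr hc
  have key : ∀ (v T : ℝ),
      (c⁻¹ * (a * v + b * T) ≠ 0 ∧ |c⁻¹ * (a * v + b * T)| < εte * (c⁻¹ * a))
        ↔ ((-(εte * a) - a * v) / b < T ∧ T < (εte * a - a * v) / b ∧ T ≠ -(a * v) / b) := by
    intro v T
    have habs : |c⁻¹ * (a * v + b * T)| = c⁻¹ * |a * v + b * T| := by
      rw [abs_mul, abs_of_pos hcinv]
    have hne : c⁻¹ * (a * v + b * T) ≠ 0 ↔ T ≠ -(a * v) / b := by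
      rw [mul_ne_zero_iff]
      constructor
      · rintro ⟨_, h2⟩ hT
        apply h2; rw [hT]; field_simp
        ring
      · intro hT
        refine ⟨ne_of_gt hcinv, fun h0 => hT ?_⟩
        rw [eq_div_iff hbne]
        linear_combination h0
    have hlt : c⁻¹ * |a * v + b * T| < εte * (c⁻¹ * a) ↔ |a * v + b * T| < εte * a := by
      rw [show εte * (c⁻¹ * a) = c⁻¹ * (εte * a) by ring]
      exact mul_lt_mul_iff_right₀ hcinv
    rw [habs, hne, hlt, abs_lt]
    constructor
    · rintro ⟨hT, h1, h2⟩
      refine ⟨?_, ?_, hT⟩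
      · rw [div_lt_iff₀ hb]; linarith
      · rw [lt_div_iff₀ hb]; linarith
    · rintro ⟨h1, h2, hT⟩
      rw [div_lt_iff₀ hb] at h1
      rw [lt_div_iff₀ hb] at h2
      exact ⟨hT, by linarith, by linarith⟩
  -- the measurable projection T
  have hTmeas : Measurable (fun xt : Fin m → ℝ => ∑ j, θt j * xt j) :=
    Finset.univ.measurable_sum fun j _ => (measurable_pi_apply j).const_mul _
  have hmapT : Measure.map (fun xt : Fin m → ℝ => ∑ j, θt j * xt j) (gaussPi m σ)
      = gaussianReal 0 (Real.toNNReal (σ^2)) := by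
    rw [gaussPi]
    rw [map_weighted_sum (Real.toNNReal (σ^2)) m θt, hS1, Real.toNNReal_one, one_mul]
  have hσ2 : Real.toNNReal (σ^2) ≠ 0 := ne_of_gt (Real.toNNReal_pos.mpr (by positivity))
  -- the two branch preimages and their measures
  have hbranch : ∀ v : ℝ,
      (gaussPi m σ) ((fun xt : Fin m → ℝ => dot θhat (Fin.cons v xt)) ⁻¹' K)
        = gaussianReal 0 (Real.toNNReal (σ^2))
            (Ioo ((-(εte * a) - a * v) / b) ((εte * a - a * v) / b)) := by
    intro v
    have hpre : ((fun xt : Fin m → ℝ => dot θhat (Fin.cons v xt)) ⁻¹' K)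
        = (fun xt : Fin m → ℝ => ∑ j, θt j * xt j) ⁻¹'
            (Ioo ((-(εte * a) - a * v) / b) ((εte * a - a * v) / b) \ {-(a * v) / b}) := by
      ext xt
      simp only [mem_preimage, hKdef, mem_setOf_eq, hcons, mem_diff, mem_Ioo,
        mem_singleton_iff]
      rw [key v (∑ j, θt j * xt j)]
      tauto
    rw [hpre, ← Measure.map_apply hTmeas
        (measurableSet_Ioo.diff (measurableSet_singleton _)), hmapT,
      measure_diff_null (gauss_singleton _ hσ2 _)]
  -- arithmetic facts for the interval bounds
  have hlu : ∀ v : ℝ, (-(εte * a) - a * v) / b ≤ (εte * a - a * v) / b := by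
    intro v
    gcongr
    nlinarith [mul_nonneg hεte ha.le]
  have hval : ∀ v : ℝ,
      ((gaussianReal 0 (Real.toNNReal (σ^2)))
        (Ioo ((-(εte * a) - a * v) / b) ((εte * a - a * v) / b))).toReal
      = stdGaussianCDF (((εte * a - a * v) / b) / σ)
        - stdGaussianCDF (((-(εte * a) - a * v) / b) / σ) := by
    intro v
    rw [gauss_Ioo_toReal _ hσ2 _ _ (hlu v), cdf_scale σ hσ, cdf_scale σ hσ]
  have hconsMeas : ∀ v : ℝ,
      Measurable fun xt : Fin m → ℝ => (Fin.cons v xt : Fin (m+1) → ℝ) := by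
    intro v
    exact measurable_pi_iff.mpr fun i =>
      Fin.cases measurable_const (fun j => measurable_pi_apply j) i
  simp only [Pdist, Measure.coe_add, Pi.add_apply, Measure.coe_smul, Pi.smul_apply,
    smul_eq_mul]
  rw [Measure.map_apply ((hconsMeas (r/2)).prodMk measurable_const) (hdotm hK_meas),
    Measure.map_apply ((hconsMeas (-(r/2))).prodMk measurable_const) (hdotm hK_meas)]
  have hcomp : ∀ (v lab : ℝ),
      ((fun xt : Fin m → ℝ => ((Fin.cons v xt : Fin (m+1) → ℝ), lab)) ⁻¹'
        ((fun p : (Fin (m+1) → ℝ) × ℝ => dot θhat p.1) ⁻¹' K))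
      = ((fun xt : Fin m → ℝ => dot θhat (Fin.cons v xt)) ⁻¹' K) := fun _ _ => rfl
  rw [hcomp (r/2) 1, hcomp (-(r/2)) (-1), hbranch (r/2), hbranch (-(r/2))]
  rw [ENNReal.toReal_add (ENNReal.mul_ne_top (by simp) (measure_ne_top _ _))
    (ENNReal.mul_ne_top (by simp) (measure_ne_top _ _)),
    ENNReal.toReal_mul, ENNReal.toReal_mul]
  have h1 := hval (r/2)
  have h2 := hval (-(r/2))
  have e1 : ((εte * a - a * (r/2)) / b) / σ = a * (εte - r/2) / (b * σ) := by
    field_simp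
  have e2 : ((-(εte * a) - a * (r/2)) / b) / σ = a * (-εte - r/2) / (b * σ) := by
    field_simp
  have e3 : ((εte * a - a * (-(r/2))) / b) / σ = -(a * (-εte - r/2) / (b * σ)) := by
    field_simp; ring
  have e4 : ((-(εte * a) - a * (-(r/2))) / b) / σ = -(a * (εte - r/2) / (b * σ)) := by
    field_simp; ring
  rw [e1, e2] at h1
  rw [e3, e4, cdf_symm, cdf_symm] at h2
  rw [h1, h2]
  simp only [ENNReal.toReal_inv, ENNReal.toReal_ofNat]
  ring

end
end
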